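/- Let F_q be a finite field with q elements. The number of solutions in F_q^{12} of the type E_6 system (all coefficients 1): x₁x₁' = 1+x₂, x₂x₂' = 1+x₁x₃, x₃x₃' = 1+x₂x₄x₆, x₄x₄' = 1+x₃x₅, x₅x₅' = 1+x₄, x₆x₆' = 1+x₃ equals q⁶ + q⁴ + q³ + q² + 1. -/

import Mathlib

set_option linter.unusedSectionVars false

section E6Aux

variable {F : Type*} [Field F] [Fintype F]

open scoped Classical in
/-- number of `y` with `t*y = c`, as an integer, where `q` is the field size -/
noncomputable def cntE6 (q : ℤ) (t c : F) : ℤ := if t = 0 then (if c = 0 then q else 0) else 1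

open scoped Classical in
/-- value of the basic one-variable sums -/
noncomputable def AE6 (q : ℤ) (u v : F) : ℤ :=
  if u = 0 then (if v = 0 then 0 else q) else (q - 1 + if u = -1 then q else 0)

/-- the fiber of the solution set over a choice of the `x` variables,
ordered as `(b,c,d,a,e,f) = (x₂,x₃,x₄,x₁,x₅,x₆)` -/
abbrev fibE6 (v : F × F × F × F × F × F) : Type _ :=
  {y : F // v.2.2.2.1 * y = 1 + v.1} × {y : F // v.1 * y = 1 + v.2.2.2.1 * v.2.1} ×
  {y : F // v.2.1 * y = 1 + v.1 * v.2.2.1 * v.2.2.2.2.2} ×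
  {y : F // v.2.2.1 * y = 1 + v.2.1 * v.2.2.2.2.1} ×
  {y : F // v.2.2.2.2.1 * y = 1 + v.2.2.1} × {y : F // v.2.2.2.2.2 * y = 1 + v.2.1}

def equivE6 : {p : (Fin 6 → F) × (Fin 6 → F) //
      p.1 0 * p.2 0 = 1 + p.1 1 ∧
      p.1 1 * p.2 1 = 1 + p.1 0 * p.1 2 ∧
      p.1 2 * p.2 2 = 1 + p.1 1 * p.1 3 * p.1 5 ∧
      p.1 3 * p.2 3 = 1 + p.1 2 * p.1 4 ∧
      p.1 4 * p.2 4 = 1 + p.1 3 ∧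
      p.1 5 * p.2 5 = 1 + p.1 2} ≃ Σ v : F × F × F × F × F × F, fibE6 v where
  toFun p := ⟨(p.1.1 1, p.1.1 2, p.1.1 3, p.1.1 0, p.1.1 4, p.1.1 5),
    ⟨p.1.2 0, p.2.1⟩, ⟨p.1.2 1, p.2.2.1⟩, ⟨p.1.2 2, p.2.2.2.1⟩, ⟨p.1.2 3, p.2.2.2.2.1⟩,
    ⟨p.1.2 4, p.2.2.2.2.2.1⟩, ⟨p.1.2 5, p.2.2.2.2.2.2⟩⟩
  invFun w := ⟨(![w.1.2.2.2.1, w.1.1, w.1.2.1, w.1.2.2.1, w.1.2.2.2.2.1, w.1.2.2.2.2.2],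
      ![w.2.1.1, w.2.2.1.1, w.2.2.2.1.1, w.2.2.2.2.1.1, w.2.2.2.2.2.1.1, w.2.2.2.2.2.2.1]),
    ⟨w.2.1.2, w.2.2.1.2, w.2.2.2.1.2, w.2.2.2.2.1.2, w.2.2.2.2.2.1.2, w.2.2.2.2.2.2.2⟩⟩
  left_inv p := by
    ext i : 3 <;> fin_cases i <;> rfl
  right_inv w := by
    obtain ⟨⟨b,c,d,a,e,f⟩, ⟨y1,h1⟩,⟨y2,h2⟩,⟨y3,h3⟩,⟨y4,h4⟩,⟨y5,h5⟩,⟨y6,h6⟩⟩ := w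
    rfl

lemma card_lin_E6 (t c : F) :
    (Nat.card {y : F // t * y = c} : ℤ) = cntE6 (Fintype.card F) t c := by
  classical
  rcases eq_or_ne t 0 with ht | ht
  · subst ht
    rcases eq_or_ne c 0 with hc | hc
    · subst hc
      rw [Nat.card_congr (Equiv.subtypeUnivEquiv (by simp)), Nat.card_eq_fintype_card]
      simp [cntE6]
    · have : IsEmpty {y : F // 0 * y = c} := ⟨fun y => hc (by simpa using y.2.symm)⟩
      rw [Nat.card_of_isEmpty]
      simp [cntE6, hc]
  · have : Unique {y : F // t * y = c} :=
      { default := ⟨t⁻¹ * c, by field_simp⟩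
        uniq := fun y => Subtype.ext (by
          have := y.2
          field_simp
          linear_combination this) }
    rw [Nat.card_unique]
    simp [cntE6, ht]

section
open Finset
variable (q : ℤ)

lemma cntE6_ne {t : F} (c : F) (ht : t ≠ 0) : cntE6 q t c = 1 := by
  classical
  simp [cntE6, ht]

lemma cntE6_zero {c : F} (hc : c = 0) : cntE6 q (0 : F) c = q := by
  classical
  simp [cntE6, hc]

lemma cntE6_zero' {c : F} (hc : c ≠ 0) : cntE6 q (0 : F) c = 0 := by
  classical
  simp [cntE6, hc]

lemma hcardE6 : ((Fintype.card F : ℤ)) - 1 = ((Fintype.card F - 1 : ℕ) : ℤ) := by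
  have := Fintype.card_pos (α := F)
  omega

open scoped Classical in
lemma sum_erase_E6 (hq : q = (Fintype.card F : ℤ)) :
    ∑ x ∈ (univ.erase (0:F)), (q - 1 + if x = -1 then q else 0)
      = (q - 1) * (q - 1) + q := by
  classical
  rw [Finset.sum_add_distrib, Finset.sum_const,
    Finset.sum_ite_eq' (univ.erase (0:F)) (-1 : F) (fun _ => q)]
  have hm : (-1 : F) ∈ univ.erase (0:F) := by
    simp [Finset.mem_erase]
  rw [if_pos hm, Finset.card_erase_of_mem (mem_univ _), Finset.card_univ]
  rw [nsmul_eq_mul, hq, hcardE6]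

open scoped Classical in
lemma sumA_E6 (hq : q = (Fintype.card F : ℤ)) (u v : F) :
    ∑ t : F, cntE6 q t (1+u) * cntE6 q u (1+t*v) = AE6 q u v := by
  classical
  rcases eq_or_ne u 0 with hu | hu
  · subst hu
    rcases eq_or_ne v 0 with hv | hv
    · subst hv
      have h1 : ∀ t : F, cntE6 q t (1+(0:F)) * cntE6 q (0:F) (1+t*0) = 0 := by
        intro t
        rw [cntE6_zero' q (c := 1 + t*0) (by simp), mul_zero]
      rw [Finset.sum_congr rfl fun t _ => h1 t]
      simp [AE6]
    · have h1 : ∀ t : F, cntE6 q t (1+(0:F)) * cntE6 q (0:F) (1+t*v)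
          = if t = -v⁻¹ then q else 0 := by
        intro t
        rcases eq_or_ne t (-v⁻¹) with ht | ht
        · subst ht
          have htne : (-v⁻¹ : F) ≠ 0 := by simp [hv]
          have hz : (1 : F) + (-v⁻¹) * v = 0 := by field_simp; ring
          rw [cntE6_ne q _ htne, cntE6_zero q hz, one_mul, if_pos rfl]
        · have hnz : (1 : F) + t * v ≠ 0 := by
            intro h
            apply ht
            have htv : t * v = -1 := by linear_combination h
            apply mul_right_cancel₀ hv
            rw [htv]
            field_simp
          rw [cntE6_zero' q hnz, mul_zero, if_neg ht]
      rw [Finset.sum_congr rfl fun t _ => h1 t, Finset.sum_ite_eq' univ (-v⁻¹) (fun _ => q)]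
      simp [AE6, hv]
  · have h1 : ∀ t : F, cntE6 q t (1+u) * cntE6 q u (1+t*v) = cntE6 q t (1+u) := by
      intro t; rw [cntE6_ne q _ hu, mul_one]
    rw [Finset.sum_congr rfl fun t _ => h1 t,
      ← Finset.add_sum_erase univ _ (mem_univ (0:F))]
    have h2 : ∀ t ∈ univ.erase (0:F), cntE6 q t (1+u) = 1 := fun t ht =>
      cntE6_ne q _ (Finset.mem_erase.mp ht).1
    rw [Finset.sum_congr rfl h2, Finset.sum_const,
      Finset.card_erase_of_mem (mem_univ _), Finset.card_univ]
    have h3 : cntE6 q (0:F) (1+u) = if u = -1 then q else 0 := by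
      rcases eq_or_ne u (-1) with h | h
      · subst h
        rw [cntE6_zero q (by ring), if_pos rfl]
      · have : (1:F) + u ≠ 0 := fun hc => h (by linear_combination hc)
        rw [cntE6_zero' q this, if_neg h]
    rw [h3]
    simp only [AE6, if_neg hu, nsmul_eq_mul, mul_one]
    rw [hq, hcardE6]
    ring

lemma sumA_total0 (hq : q = (Fintype.card F : ℤ)) :
    ∑ b : F, AE6 q b 0 = q * q - q + 1 := by
  classical
  rw [← Finset.add_sum_erase univ _ (mem_univ (0:F))]
  have h0 : AE6 q (0:F) (0:F) = 0 := by simp [AE6]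
  have h1 : ∀ b ∈ univ.erase (0:F), AE6 q b (0:F) = q - 1 + if b = -1 then q else 0 := by
    intro b hb
    simp only [AE6, if_neg (Finset.mem_erase.mp hb).1]
  rw [h0, Finset.sum_congr rfl h1, sum_erase_E6 q hq]
  ring

lemma sumA_total (hq : q = (Fintype.card F : ℤ)) (c : F) (hc : c ≠ 0) :
    ∑ b : F, AE6 q b c = q * q + 1 := by
  classical
  rw [← Finset.add_sum_erase univ _ (mem_univ (0:F))]
  have h0 : AE6 q (0:F) c = q := by simp [AE6, hc]
  have h1 : ∀ b ∈ univ.erase (0:F), AE6 q b c = q - 1 + if b = -1 then q else 0 := by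
    intro b hb
    simp only [AE6, if_neg (Finset.mem_erase.mp hb).1]
  rw [h0, Finset.sum_congr rfl h1, sum_erase_E6 q hq]
  ring

open scoped Classical in
lemma bigsum_E6 (hq : q = (Fintype.card F : ℤ)) :
    ∑ b : F, ∑ c : F, ∑ d : F, AE6 q b c * AE6 q d c * AE6 q c (b*d)
      = q^6 + q^4 + q^3 + q^2 + 1 := by
  classical
  rw [Finset.sum_comm]
  rw [← Finset.add_sum_erase univ _ (mem_univ (0:F))]
  have g0 : ∑ b : F, ∑ d : F, AE6 q b (0:F) * AE6 q d (0:F) * AE6 q (0:F) (b*d)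
      = (q*q - q + 1) * (q*q - q + 1) * q := by
    have hpt : ∀ b : F, ∀ d : F, AE6 q b (0:F) * AE6 q d (0:F) * AE6 q (0:F) (b*d)
        = AE6 q b (0:F) * AE6 q d (0:F) * q := by
      intro b d
      rcases eq_or_ne b 0 with hb | hb
      · subst hb; simp [AE6]
      rcases eq_or_ne d 0 with hd | hd
      · subst hd; simp [AE6]
      · have hbd : b * d ≠ 0 := mul_ne_zero hb hd
        have : AE6 q (0:F) (b*d) = q := by simp [AE6, hbd]
        rw [this]
    rw [Finset.sum_congr rfl fun b _ => Finset.sum_congr rfl fun d _ => hpt b d]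
    rw [← sumA_total0 q hq]
    rw [Finset.sum_mul_sum, Finset.sum_mul]
    exact Finset.sum_congr rfl fun b _ => by rw [Finset.sum_mul]
  have gne : ∀ c ∈ univ.erase (0:F),
      (∑ b : F, ∑ d : F, AE6 q b c * AE6 q d c * AE6 q c (b*d))
        = (q*q+1) * (q*q+1) * (q - 1 + if c = -1 then q else 0) := by
    intro c hc
    have hc' := (Finset.mem_erase.mp hc).1
    have hpt : ∀ b : F, ∀ d : F, AE6 q b c * AE6 q d c * AE6 q c (b*d)
        = AE6 q b c * AE6 q d c * (q - 1 + if c = -1 then q else 0) := by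
      intro b d
      have : AE6 q c (b*d) = q - 1 + if c = -1 then q else 0 := by
        simp only [AE6, if_neg hc']
      rw [this]
    rw [Finset.sum_congr rfl fun b _ => Finset.sum_congr rfl fun d _ => hpt b d]
    rw [show (q*q+1) * (q*q+1) * (q - 1 + if c = -1 then q else 0)
        = ((∑ b : F, AE6 q b c) * (∑ d : F, AE6 q d c)) * (q - 1 + if c = -1 then q else 0) by
      rw [sumA_total q hq c hc']]
    rw [Finset.sum_mul_sum, Finset.sum_mul]
    exact Finset.sum_congr rfl fun b _ => by rw [Finset.sum_mul]
  rw [g0, Finset.sum_congr rfl gne, ← Finset.mul_sum, sum_erase_E6 q hq]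
  ring

lemma inner3_E6 (b c d : F) :
    (∑ a : F, ∑ e : F, ∑ f : F,
      cntE6 q a (1+b) * cntE6 q b (1+a*c) * cntE6 q c (1+b*d*f) *
        cntE6 q d (1+c*e) * cntE6 q e (1+d) * cntE6 q f (1+c))
    = (∑ a : F, cntE6 q a (1+b) * cntE6 q b (1+a*c)) *
      (∑ e : F, cntE6 q d (1+c*e) * cntE6 q e (1+d)) *
      (∑ f : F, cntE6 q c (1+b*d*f) * cntE6 q f (1+c)) := by
  symm
  rw [mul_assoc, Finset.sum_mul_sum, Finset.sum_mul_sum]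
  simp only [Finset.mul_sum]
  exact Finset.sum_congr rfl fun a _ => Finset.sum_congr rfl fun e _ =>
    Finset.sum_congr rfl fun f _ => by ring

end

end E6Aux

-- p.1 i = xᵢ₊₁ and p.2 i = x'ᵢ₊₁ (0-indexed); vertex 6 (index 5) is attached to vertex 3 (index 2)
theorem stmt_16 (F : Type*) [Field F] [Fintype F] :
    Nat.card {p : (Fin 6 → F) × (Fin 6 → F) //
      p.1 0 * p.2 0 = 1 + p.1 1 ∧
      p.1 1 * p.2 1 = 1 + p.1 0 * p.1 2 ∧
      p.1 2 * p.2 2 = 1 + p.1 1 * p.1 3 * p.1 5 ∧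
      p.1 3 * p.2 3 = 1 + p.1 2 * p.1 4 ∧
      p.1 4 * p.2 4 = 1 + p.1 3 ∧
      p.1 5 * p.2 5 = 1 + p.1 2} =
    Fintype.card F ^ 6 + Fintype.card F ^ 4 + Fintype.card F ^ 3 +
      Fintype.card F ^ 2 + 1 := by
  classical
  set q : ℤ := (Fintype.card F : ℤ) with hq
  have h1 : Nat.card {p : (Fin 6 → F) × (Fin 6 → F) //
      p.1 0 * p.2 0 = 1 + p.1 1 ∧
      p.1 1 * p.2 1 = 1 + p.1 0 * p.1 2 ∧
      p.1 2 * p.2 2 = 1 + p.1 1 * p.1 3 * p.1 5 ∧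
      p.1 3 * p.2 3 = 1 + p.1 2 * p.1 4 ∧
      p.1 4 * p.2 4 = 1 + p.1 3 ∧
      p.1 5 * p.2 5 = 1 + p.1 2} = ∑ v : F × F × F × F × F × F,
        Nat.card {y : F // v.2.2.2.1 * y = 1 + v.1} *
        Nat.card {y : F // v.1 * y = 1 + v.2.2.2.1 * v.2.1} *
        Nat.card {y : F // v.2.1 * y = 1 + v.1 * v.2.2.1 * v.2.2.2.2.2} *
        Nat.card {y : F // v.2.2.1 * y = 1 + v.2.1 * v.2.2.2.2.1} *
        Nat.card {y : F // v.2.2.2.2.1 * y = 1 + v.2.2.1} *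
        Nat.card {y : F // v.2.2.2.2.2 * y = 1 + v.2.1} := by
    rw [Nat.card_congr (equivE6 (F := F)), Nat.card_eq_fintype_card, Fintype.card_sigma]
    refine Finset.sum_congr rfl fun v _ => ?_
    rw [← Nat.card_eq_fintype_card]
    simp only [fibE6, Nat.card_prod]
    ring
  have h2 : ((Nat.card {p : (Fin 6 → F) × (Fin 6 → F) //
      p.1 0 * p.2 0 = 1 + p.1 1 ∧
      p.1 1 * p.2 1 = 1 + p.1 0 * p.1 2 ∧
      p.1 2 * p.2 2 = 1 + p.1 1 * p.1 3 * p.1 5 ∧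
      p.1 3 * p.2 3 = 1 + p.1 2 * p.1 4 ∧
      p.1 4 * p.2 4 = 1 + p.1 3 ∧
      p.1 5 * p.2 5 = 1 + p.1 2} : ℕ) : ℤ) = q^6 + q^4 + q^3 + q^2 + 1 := by
    rw [h1]
    push_cast
    rw [Finset.sum_congr rfl fun (v : F × F × F × F × F × F) _ => by
      rw [card_lin_E6, card_lin_E6, card_lin_E6, card_lin_E6, card_lin_E6, card_lin_E6]]
    simp only [Fintype.sum_prod_type]
    rw [Finset.sum_congr rfl fun (b : F) _ => Finset.sum_congr rfl fun (c : F) _ =>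
      Finset.sum_congr rfl fun (d : F) _ => inner3_E6 q b c d]
    have e2 : ∀ b c d : F, (∑ e : F, cntE6 q d (1+c*e) * cntE6 q e (1+d))
        = AE6 q d c := by
      intro b c d
      rw [← sumA_E6 q hq d c]
      exact Finset.sum_congr rfl fun e _ => by rw [mul_comm c e, mul_comm]
    have e3 : ∀ b c d : F, (∑ f : F, cntE6 q c (1+b*d*f) * cntE6 q f (1+c))
        = AE6 q c (b*d) := by
      intro b c d
      rw [← sumA_E6 q hq c (b*d)]
      refine Finset.sum_congr rfl fun f _ => ?_
      rw [mul_comm, show b*d*f = f*(b*d) by ring]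
    rw [Finset.sum_congr rfl fun (b : F) _ => Finset.sum_congr rfl fun (c : F) _ =>
      Finset.sum_congr rfl fun (d : F) _ => by
        rw [sumA_E6 q hq b c, e2 b c d, e3 b c d]]
    exact bigsum_E6 q hq
  have hcast : ((Fintype.card F ^ 6 + Fintype.card F ^ 4 + Fintype.card F ^ 3 +
      Fintype.card F ^ 2 + 1 : ℕ) : ℤ) = q^6 + q^4 + q^3 + q^2 + 1 := by
    push_cast [hq]
    ring
  have := h2.trans hcast.symm
  exact_mod_cast this
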